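/- For the Collins equilibrium point C(h): with h < 0, 2/3 < γ < 2(1−h)/(1−3h), and Σ₊ = −(3γ−2)/4, Σ₋ = (√(−3h)/4)(3γ−2), N² = (3/16)(3γ−2)(2−γ), A = √(−3h)·N, Ω = (3/4)[(2−γ)+h(3γ−2)], the Friedmann constraint Σ₊² + Σ₋² + N² + A² + Ω = 1 holds and Ω > 0. -/
import Mathlib

theorem stmt_8 (h γ : ℝ) (hh : h < 0) (hγ1 : 2/3 < γ)
    (hγ2 : γ < 2 * (1 - h) / (1 - 3*h)) :
    let Sp : ℝ := -(3*γ - 2) / 4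
    let Sm : ℝ := Real.sqrt (-3*h) / 4 * (3*γ - 2)
    let N : ℝ := Real.sqrt ((3/16) * (3*γ - 2) * (2 - γ))
    let A : ℝ := Real.sqrt (-3*h) * N
    let Ω : ℝ := (3/4) * ((2 - γ) + h * (3*γ - 2))
    Sp^2 + Sm^2 + N^2 + A^2 + Ω = 1 ∧ 0 < Ω := by
  intro Sp Sm N A Ω
  have h13 : (0:ℝ) < 1 - 3*h := by linarith
  have hγle : γ * (1 - 3*h) < 2 * (1 - h) := (lt_div_iff₀ h13).mp hγ2
  have hγ2' : γ < 2 := by nlinarith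
  have hsq : Real.sqrt (-3*h) ^ 2 = -3*h := Real.sq_sqrt (by linarith)
  have hNsq : N ^ 2 = (3/16) * (3*γ - 2) * (2 - γ) :=
    Real.sq_sqrt (by nlinarith)
  constructor
  · show (-(3*γ - 2) / 4)^2 + (Real.sqrt (-3*h) / 4 * (3*γ - 2))^2 + N^2
      + (Real.sqrt (-3*h) * N)^2 + (3/4) * ((2 - γ) + h * (3*γ - 2)) = 1
    linear_combination ((3*γ-2)^2/16 + (3/16)*(3*γ-2)*(2-γ)) * hsq
      + (1 + Real.sqrt (-3*h)^2) * hNsq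
  · show 0 < (3/4) * ((2 - γ) + h * (3*γ - 2))
    nlinarith
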